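/- There is a constant C such that for all x ≥ 2, every integer q with 1 ≤ q ≤ x^(1/2), and every integer a with gcd(a, q) = 1, one has |Σ_{n ≤ x} τ(n) e(an/q) − (x/q)·(log(x/q²) + 2γ − 1)| ≤ C · x^(1/2) · (1 + log q), where the sum is over positive integers n ≤ x and γ is the Euler–Mascheroni constant. -/

import Mathlib

open Finset

/-- `e(β) = exp(2πiβ)`. -/
noncomputable def e (β : ℝ) : ℂ := Complex.exp (2 * Real.pi * Complex.I * β)

lemma e_eq (β : ℝ) : e β = Complex.exp ((2 * Real.pi * β : ℝ) * Complex.I) := by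
  unfold e; push_cast; ring_nf

lemma e_int (k : ℤ) : e (k : ℝ) = 1 := by
  unfold e
  have : (2 * Real.pi * Complex.I * (k:ℝ)) = (k : ℂ) * (2 * Real.pi * Complex.I) := by
    push_cast; ring
  rw [this]
  exact Complex.exp_int_mul_two_pi_mul_I k

lemma e_add (s t : ℝ) : e (s + t) = e s * e t := by
  unfold e
  rw [← Complex.exp_add]
  push_cast
  ring_nf

lemma e_add_int (t : ℝ) (k : ℤ) : e (t + k) = e t := by
  rw [e_add, e_int, mul_one]

lemma norm_e (t : ℝ) : ‖e t‖ = 1 := by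
  rw [e_eq]
  exact Complex.norm_exp_ofReal_mul_I _

lemma e_nat_mul (t : ℝ) (m : ℕ) : e (t * m) = (e t) ^ m := by
  unfold e
  rw [← Complex.exp_nat_mul]
  push_cast
  ring_nf

lemma e_re_im (t : ℝ) : e t = Real.cos (2 * Real.pi * t) + Real.sin (2 * Real.pi * t) * Complex.I := by
  rw [e_eq, Complex.exp_mul_I, ← Complex.ofReal_cos, ← Complex.ofReal_sin]

lemma norm_e_sub_one (t : ℝ) : ‖e t - 1‖ = 2 * |Real.sin (Real.pi * t)| := by
  have h := e_re_im t
  have : e t - 1 = ((Real.cos (2*Real.pi*t) - 1 : ℝ) : ℂ) + (Real.sin (2*Real.pi*t) : ℝ) * Complex.I := by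
    rw [h]; push_cast; ring
  rw [this, Complex.norm_add_mul_I]
  have hcos : Real.cos (2*Real.pi*t) = 1 - 2 * Real.sin (Real.pi*t)^2 := by
    have : 2*Real.pi*t = 2 * (Real.pi*t) := by ring
    rw [this, Real.cos_two_mul']
    have := Real.sin_sq_add_cos_sq (Real.pi*t)
    nlinarith
  have hval : (Real.cos (2*Real.pi*t) - 1)^2 + Real.sin (2*Real.pi*t)^2
      = (2 * |Real.sin (Real.pi*t)|)^2 := by
    have h2 : Real.sin (2*Real.pi*t) = 2 * Real.sin (Real.pi*t) * Real.cos (Real.pi*t) := by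
      have : 2*Real.pi*t = 2 * (Real.pi*t) := by ring
      rw [this, Real.sin_two_mul]
    have hsc := Real.sin_sq_add_cos_sq (Real.pi*t)
    have habs : |Real.sin (Real.pi*t)|^2 = Real.sin (Real.pi*t)^2 := sq_abs _
    rw [hcos, h2]; nlinarith [sq_nonneg (Real.sin (Real.pi*t))]
  rw [hval]
  exact Real.sqrt_sq (by positivity)
lemma geom_bound {z : ℂ} (hz : ‖z‖ = 1) (h1 : z ≠ 1) (M : ℕ) :
    ‖∑ m ∈ Icc 1 M, z ^ m‖ ≤ 2 / ‖z - 1‖ := by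
  have hrw : ∑ m ∈ Icc 1 M, z ^ m = z * ∑ i ∈ range M, z ^ i := by
    rw [Finset.mul_sum, ← Finset.Ico_add_one_right_eq_Icc, Finset.sum_Ico_eq_sum_range]
    simp only [Nat.add_sub_cancel]
    refine Finset.sum_congr rfl fun i _ => ?_
    rw [pow_add, pow_one]
  rw [hrw, geom_sum_eq h1 M, norm_mul, hz, one_mul, norm_div]
  gcongr
  · exact (norm_sub_le _ _).trans (by rw [norm_pow, hz, one_pow, norm_one]; norm_num)

lemma sin_lower {r q b : ℕ} (h1 : 1 ≤ r) (h2 : r < q) (hb : b = min r (q - r)) :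
    2 * (b : ℝ) / q ≤ Real.sin (Real.pi * r / q) := by
  have hq : (0:ℝ) < q := by exact_mod_cast Nat.pos_of_ne_zero (by omega)
  have hpi := Real.pi_pos
  rcases le_or_gt (2 * r) q with hc | hc
  · have hmin : (b : ℝ) ≤ r := by
      have : b ≤ r := by omega
      exact_mod_cast this
    have h0 : (0:ℝ) ≤ Real.pi * r / q := by positivity
    have hhalf : Real.pi * r / q ≤ Real.pi / 2 := by
      rw [div_le_div_iff₀ hq (by norm_num : (0:ℝ) < 2)]
      have : (2 * r : ℝ) ≤ q := by exact_mod_cast hc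
      nlinarith
    have hJ := Real.mul_le_sin h0 hhalf
    have heq : 2 / Real.pi * (Real.pi * r / q) = 2 * r / q := by
      field_simp
    rw [heq] at hJ
    refine le_trans ?_ hJ
    rw [div_le_div_iff₀ hq hq]
    nlinarith
  · have hr' : 1 ≤ q - r := by omega
    have hc' : 2 * (q - r) ≤ q := by omega
    have hcast : ((q - r : ℕ) : ℝ) = (q:ℝ) - r := Nat.cast_sub (le_of_lt h2)
    have hmin : (b : ℝ) ≤ ((q - r : ℕ) : ℝ) := by
      have : b ≤ q - r := by omega
      exact_mod_cast this
    have hsin : Real.sin (Real.pi * r / q) = Real.sin (Real.pi * ((q - r : ℕ):ℝ) / q) := by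
      rw [← Real.sin_pi_sub]
      congr 1
      rw [hcast]
      field_simp
    rw [hsin]
    have h0 : (0:ℝ) ≤ Real.pi * ((q - r : ℕ):ℝ) / q := by positivity
    have hhalf : Real.pi * ((q - r : ℕ):ℝ) / q ≤ Real.pi / 2 := by
      rw [div_le_div_iff₀ hq (by norm_num : (0:ℝ) < 2)]
      have : (2 * ((q - r : ℕ):ℝ) : ℝ) ≤ q := by exact_mod_cast hc'
      nlinarith
    have hJ := Real.mul_le_sin h0 hhalf
    have heq : 2 / Real.pi * (Real.pi * ((q - r : ℕ):ℝ) / q) = 2 * ((q - r : ℕ):ℝ) / q := by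
      field_simp
    rw [heq] at hJ
    refine le_trans ?_ hJ
    rw [div_le_div_iff₀ hq hq]
    nlinarith

lemma norm_e_rat_sub_one_ge {r q b : ℕ} (h1 : 1 ≤ r) (h2 : r < q) (hb : b = min r (q - r)) :
    4 * (b : ℝ) / q ≤ ‖e ((r:ℝ)/q) - 1‖ := by
  rw [norm_e_sub_one]
  have harg : Real.pi * ((r:ℝ)/q) = Real.pi * r / q := by ring
  rw [harg]
  have hs := sin_lower h1 h2 hb
  have hq : (0:ℝ) < q := by exact_mod_cast Nat.pos_of_ne_zero (by omega)
  have habs : |Real.sin (Real.pi * r / q)| = Real.sin (Real.pi * r / q) := by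
    rw [abs_of_nonneg]
    refine le_trans ?_ hs
    positivity
  rw [habs]
  calc 4 * (b : ℝ) / q = 2 * (2 * (b:ℝ) / q) := by ring
  _ ≤ 2 * Real.sin (Real.pi * r / q) := by linarith
lemma inner_mult {q : ℕ} (hq : 1 ≤ q) (a : ℤ) (j : ℕ) (M : ℕ) :
    ∑ m ∈ Icc 1 M, e ((a:ℝ)/q * ((q*j : ℕ)*m)) = (M : ℂ) := by
  have hterm : ∀ m : ℕ, e ((a:ℝ)/q * ((q*j:ℕ)*m)) = 1 := by
    intro m
    have hqR : (q:ℝ) ≠ 0 := by positivity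
    have harg : (a:ℝ)/q * ((q*j:ℕ)*m) = ((a*j*m : ℤ) : ℝ) := by
      push_cast
      field_simp
    rw [harg, e_int]
  rw [Finset.sum_congr rfl (fun m _ => hterm m)]
  simp

lemma key_inner {q : ℕ} (hq : 1 ≤ q) {a : ℤ} (ha : Int.gcd a q = 1) {d : ℕ} (hd : ¬ q ∣ d)
    {r b : ℕ} (hr : (r:ℤ) = a * d % q) (hb : b = min r (q - r)) (M : ℕ) :
    ‖∑ m ∈ Icc 1 M, e ((a:ℝ)/q * (d*m))‖ ≤ (q:ℝ) / (2 * b) := by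
  have hq0 : (0:ℤ) < q := by exact_mod_cast hq
  have hrlt : r < q := by
    have h := Int.emod_lt_of_pos (a * d) hq0
    rw [← hr] at h
    exact_mod_cast h
  have hr1 : 1 ≤ r := by
    rcases Nat.eq_zero_or_pos r with h0 | h0
    · exfalso
      have : (q:ℤ) ∣ a * d := by
        apply Int.dvd_of_emod_eq_zero
        rw [← hr, h0]; simp
      have hcop : IsCoprime (q:ℤ) a := (Int.isCoprime_iff_gcd_eq_one.mpr ha).symm
      have : (q:ℤ) ∣ (d:ℤ) := hcop.dvd_of_dvd_mul_left this
      exact hd (by exact_mod_cast this)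
    · exact h0
  have hb1 : 1 ≤ b := by omega
  have hqR : (0:ℝ) < q := by exact_mod_cast hq
  have hbR : (0:ℝ) < b := by exact_mod_cast hb1
  -- rewrite each term as z^m
  set z : ℂ := e ((r:ℝ)/q) with hz
  have hterm : ∀ m : ℕ, e ((a:ℝ)/q * (d*m)) = z ^ m := by
    intro m
    have hdm : a * d = q * (a * d / q) + r := by
      rw [hr]; exact (Int.mul_ediv_add_emod (a*d) q).symm
    have harg : (a:ℝ)/q * (d*m) = (r:ℝ)/q * m + ((a * d / q * m : ℤ) : ℝ) := by
      have hcast : (a:ℝ) * d = q * ((a * d / q : ℤ):ℝ) + r := by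
        exact_mod_cast congrArg (Int.cast : ℤ → ℝ) hdm
      push_cast
      push_cast at hcast
      field_simp
      nlinarith [hcast]
    rw [harg, e_add_int, ← e_nat_mul]
  rw [Finset.sum_congr rfl (fun m _ => hterm m)]
  have hnormz : ‖z‖ = 1 := norm_e _
  have hlow : 4 * (b:ℝ) / q ≤ ‖z - 1‖ := norm_e_rat_sub_one_ge hr1 hrlt hb
  have hlow0 : (0:ℝ) < 4 * (b:ℝ) / q := by positivity
  have hz1 : z ≠ 1 := by
    intro h
    rw [h, sub_self, norm_zero] at hlow
    linarith
  refine (geom_bound hnormz hz1 M).trans ?_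
  have h2 : (2:ℝ) / ‖z - 1‖ ≤ 2 / (4 * (b:ℝ) / q) :=
    div_le_div_of_nonneg_left (by norm_num) hlow0 hlow
  refine h2.trans (le_of_eq ?_)
  rw [div_div_eq_mul_div, div_eq_div_iff (by positivity) (by positivity)]
  ring
/-- real harmonic number -/
noncomputable def Hr (n : ℕ) : ℝ := ∑ i ∈ Icc 1 n, (1 / i : ℝ)

lemma Hr_eq (n : ℕ) : Hr n = (harmonic n : ℝ) := by
  rw [Hr, harmonic_eq_sum_Icc]
  push_cast
  simp [one_div]

lemma Hr_lt (n : ℕ) : Hr n < Real.log (n+1) + Real.eulerMascheroniConstant := by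
  have h := Real.eulerMascheroniSeq_lt_eulerMascheroniConstant n
  rw [Real.eulerMascheroniSeq] at h
  rw [Hr_eq]
  push_cast at h ⊢
  linarith

lemma Hr_gt {n : ℕ} (hn : 1 ≤ n) : Real.log n + Real.eulerMascheroniConstant < Hr n := by
  have h := Real.eulerMascheroniConstant_lt_eulerMascheroniSeq' n
  rw [Real.eulerMascheroniSeq'] at h
  rw [if_neg (by omega)] at h
  rw [Hr_eq]
  linarith

lemma Hr_le_one_add_log {n : ℕ} : Hr n ≤ 1 + Real.log (n+1) := by
  have h := Hr_lt n
  have h2 := Real.eulerMascheroniConstant_lt_two_thirds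
  linarith

lemma Hr_close {n : ℕ} (hn : 1 ≤ n) :
    |Hr n - Real.log n - Real.eulerMascheroniConstant| ≤ 1 / n := by
  have h1 := Hr_gt hn
  have h2 := Hr_lt n
  have hn0 : (0:ℝ) < n := by exact_mod_cast hn
  have hlog : Real.log (n+1) - Real.log n ≤ 1 / n := by
    rw [← Real.log_div (by positivity) (by positivity)]
    have := Real.log_le_sub_one_of_pos (show (0:ℝ) < ((n:ℝ)+1)/n by positivity)
    have heq : ((n:ℝ)+1)/n - 1 = 1/n := by field_simp; ring
    linarith
  rw [abs_le]
  constructor <;> nlinarith [Real.log_nonneg (show (1:ℝ) ≤ n by exact_mod_cast hn)]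
/-- weight `q / (2 min(r, q-r))` -/
noncomputable def wt (q r : ℕ) : ℝ := (q:ℝ) / (2 * (min r (q - r) : ℕ))

/-- the residue `(a*s) mod q` as a natural number -/
def res (a : ℤ) (q s : ℕ) : ℕ := ((a * s) % (q:ℤ)).toNat

lemma wt_nonneg (q r : ℕ) : 0 ≤ wt q r := by
  rw [wt]
  positivity

lemma res_cast {q : ℕ} (hq : 1 ≤ q) (a : ℤ) (s : ℕ) : ((res a q s : ℕ) : ℤ) = (a * s) % q := by
  rw [res, Int.toNat_of_nonneg (Int.emod_nonneg _ (by exact_mod_cast (by omega : q ≠ 0)))]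

lemma res_lt {q : ℕ} (hq : 1 ≤ q) (a : ℤ) (s : ℕ) : res a q s < q := by
  have h := Int.emod_lt_of_pos (a * s) (show (0:ℤ) < q by exact_mod_cast hq)
  have := res_cast hq a s
  omega

lemma res_pos {q : ℕ} (hq : 1 ≤ q) {a : ℤ} (ha : Int.gcd a q = 1) {s : ℕ} (hs : ¬ q ∣ s) :
    1 ≤ res a q s := by
  rcases Nat.eq_zero_or_pos (res a q s) with h0 | h0
  · exfalso
    have hc := res_cast hq a s
    rw [h0] at hc
    have hdvd : (q:ℤ) ∣ a * s := Int.dvd_of_emod_eq_zero hc.symm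
    have hcop : IsCoprime (q:ℤ) a := (Int.isCoprime_iff_gcd_eq_one.mpr ha).symm
    have : (q:ℤ) ∣ (s:ℤ) := hcop.dvd_of_dvd_mul_left hdvd
    exact hs (by exact_mod_cast this)
  · exact h0

lemma res_add_block {q : ℕ} (hq : 1 ≤ q) (a : ℤ) (B i : ℕ) :
    res a q (B * q + i) = res a q i := by
  rw [res, res]
  congr 1
  push_cast
  rw [show a * ((B:ℤ) * q + i) = a * i + (a * B) * q by ring, Int.add_mul_emod_self_right]

/-- sum of weights over all nonzero residues -/
lemma wt_total {q : ℕ} (hq : 1 ≤ q) :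
    ∑ t ∈ Icc 1 (q-1), wt q t ≤ (q:ℝ) * (1 + Real.log q) := by
  have h1 : ∀ t ∈ Icc 1 (q-1), wt q t ≤ (q:ℝ)/(2*((t:ℕ):ℝ)) + (q:ℝ)/(2*((q-t:ℕ):ℝ)) := by
    intro t ht
    simp only [mem_Icc] at ht
    have ht0 : (0:ℝ) < ((t:ℕ):ℝ) := by exact_mod_cast (by omega : 0 < t)
    have hqt0 : (0:ℝ) < ((q-t:ℕ):ℝ) := by exact_mod_cast (by omega : 0 < q - t)
    have hA : (0:ℝ) ≤ (q:ℝ)/(2*((t:ℕ):ℝ)) := by positivity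
    have hB : (0:ℝ) ≤ (q:ℝ)/(2*((q-t:ℕ):ℝ)) := by positivity
    rcases min_cases t (q - t) with ⟨hm, _⟩ | ⟨hm, _⟩ <;> rw [wt, hm] <;> linarith
  refine (Finset.sum_le_sum h1).trans ?_
  rw [Finset.sum_add_distrib]
  have h2 : ∑ t ∈ Icc 1 (q-1), (q:ℝ)/(2*((q-t:ℕ):ℝ)) = ∑ t ∈ Icc 1 (q-1), (q:ℝ)/(2*((t:ℕ):ℝ)) := by
    have hIcc : Icc 1 (q-1) = Ico 1 q := by
      rw [← Finset.Ico_add_one_right_eq_Icc]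
      congr 1
      omega
    rw [hIcc, Finset.sum_Ico_eq_sum_range, Finset.sum_Ico_eq_sum_range]
    rw [← Finset.sum_range_reflect]
    refine Finset.sum_congr rfl fun i hi => ?_
    simp only [mem_range] at hi
    congr 3
    omega
  rw [h2, ← two_mul]
  have h3 : ∑ t ∈ Icc 1 (q-1), (q:ℝ)/(2*((t:ℕ):ℝ)) = (q:ℝ)/2 * Hr (q-1) := by
    rw [Hr, Finset.mul_sum]
    refine Finset.sum_congr rfl fun t ht => ?_
    simp only [mem_Icc] at ht
    have : ((t:ℕ):ℝ) ≠ 0 := by exact_mod_cast (by omega : t ≠ 0)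
    field_simp
  rw [h3]
  have h4 : Hr (q-1) ≤ 1 + Real.log q := by
    have h := Hr_le_one_add_log (n := q - 1)
    have hcast : ((q - 1 : ℕ) : ℝ) + 1 = (q:ℝ) := by
      have h1q : (1:ℕ) ≤ q := hq
      push_cast [Nat.cast_sub h1q]
      ring
    rwa [hcast] at h
  have hq0 : (0:ℝ) ≤ q := by positivity
  calc 2 * ((q:ℝ)/2 * Hr (q-1)) = (q:ℝ) * Hr (q-1) := by ring
  _ ≤ (q:ℝ) * (1 + Real.log q) := mul_le_mul_of_nonneg_left h4 hq0
lemma res_injOn {q : ℕ} (hq : 1 ≤ q) {a : ℤ} (ha : Int.gcd a q = 1) :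
    Set.InjOn (res a q) (Icc 1 (q-1)) := by
  intro s hs s' hs' hres
  simp only [Finset.coe_Icc, Set.mem_Icc] at hs hs'
  have hcast : (a * s) % (q:ℤ) = (a * s') % (q:ℤ) := by
    rw [← res_cast hq a s, ← res_cast hq a s', hres]
  have hdvd : (q:ℤ) ∣ a * s' - a * s := Int.ModEq.dvd hcast
  have hcop : IsCoprime (q:ℤ) a := (Int.isCoprime_iff_gcd_eq_one.mpr ha).symm
  have hdvd2 : (q:ℤ) ∣ (s':ℤ) - s := by
    have : a * s' - a * s = a * ((s':ℤ) - s) := by ring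
    rw [this] at hdvd
    exact hcop.dvd_of_dvd_mul_left hdvd
  have hzero : (s':ℤ) - s = 0 := by
    rcases hdvd2 with ⟨k, hk⟩
    have h1 : (s':ℤ) ≤ q - 1 := by exact_mod_cast hs'.2
    have h2 : (1:ℤ) ≤ s := by exact_mod_cast hs.1
    have h3 : (s:ℤ) ≤ q - 1 := by exact_mod_cast hs.2
    have h4 : (1:ℤ) ≤ s' := by exact_mod_cast hs'.1
    have hq' : (1:ℤ) ≤ q := by exact_mod_cast hq
    rcases le_or_gt k 0 with hk0 | hk0
    · rcases eq_or_lt_of_le hk0 with rfl | hk0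
      · simpa using hk
      · nlinarith
    · nlinarith
  have : (s':ℤ) = s := by linarith
  exact_mod_cast this.symm

/-- the error weight function -/
noncomputable def Fw (a : ℤ) (q d : ℕ) : ℝ := if q ∣ d then 0 else wt q (res a q d)

lemma Fw_nonneg (a : ℤ) (q d : ℕ) : 0 ≤ Fw a q d := by
  rw [Fw]; split
  · exact le_refl 0
  · exact wt_nonneg _ _

lemma block_sum {q : ℕ} (hq : 1 ≤ q) {a : ℤ} (ha : Int.gcd a q = 1) :
    ∑ i ∈ range q, Fw a q i ≤ (q:ℝ) * (1 + Real.log q) := by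
  have hsplit : range q = insert 0 (Icc 1 (q-1)) := by
    ext i
    simp only [mem_range, mem_insert, mem_Icc]
    omega
  rw [hsplit, Finset.sum_insert (by simp)]
  have h0 : Fw a q 0 = 0 := by rw [Fw, if_pos (dvd_zero q)]
  rw [h0, zero_add]
  have hFw : ∀ i ∈ Icc 1 (q-1), Fw a q i = wt q (res a q i) := by
    intro i hi
    simp only [mem_Icc] at hi
    rw [Fw, if_neg]
    intro hdvd
    have := Nat.le_of_dvd (by omega) hdvd
    omega
  rw [Finset.sum_congr rfl hFw]
  have himg : ∑ s ∈ Icc 1 (q-1), wt q (res a q s) = ∑ t ∈ (Icc 1 (q-1)).image (res a q), wt q t := by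
    rw [Finset.sum_image (fun s hs s' hs' h => res_injOn hq ha (by exact_mod_cast hs) (by exact_mod_cast hs') h)]
  rw [himg]
  refine le_trans (Finset.sum_le_sum_of_subset_of_nonneg ?_ (fun t _ _ => wt_nonneg q t)) (wt_total hq)
  intro t ht
  simp only [mem_image] at ht
  obtain ⟨s, hs, rfl⟩ := ht
  simp only [mem_Icc] at hs ⊢
  constructor
  · exact res_pos hq ha (fun hdvd => by have := Nat.le_of_dvd (by omega) hdvd; omega)
  · have := res_lt hq a s
    omega

lemma err_sum {q : ℕ} (hq : 1 ≤ q) {a : ℤ} (ha : Int.gcd a q = 1) (K : ℕ) :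
    ∑ d ∈ Icc 1 K, Fw a q d ≤ ((K:ℝ) + q) * (1 + Real.log q) := by
  have hblocks : ∀ n : ℕ, ∑ d ∈ range (n * q), Fw a q d = n * (∑ i ∈ range q, Fw a q i) := by
    intro n
    induction n with
    | zero => simp
    | succ n ih =>
      have : (n+1) * q = n * q + q := by ring
      rw [this, Finset.sum_range_add, ih]
      have hshift : ∀ i ∈ range q, Fw a q (n * q + i) = Fw a q i := by
        intro i _
        rw [Fw, Fw, res_add_block hq a n i]
        have hdvd : q ∣ n * q + i ↔ q ∣ i := Nat.dvd_add_right (dvd_mul_left q n)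
        simp only [hdvd]
      rw [Finset.sum_congr rfl hshift]
      push_cast
      ring
  have hsub : Icc 1 K ⊆ range ((K/q + 1) * q) := by
    intro d hd
    simp only [mem_Icc] at hd
    simp only [mem_range]
    have h1 := Nat.div_add_mod K q
    have h2 : K % q < q := Nat.mod_lt _ (by omega)
    nlinarith [hd.2]
  refine le_trans (Finset.sum_le_sum_of_subset_of_nonneg hsub (fun d _ _ => Fw_nonneg a q d)) ?_
  rw [hblocks (K/q + 1)]
  have h1 : (∑ i ∈ range q, Fw a q i) ≤ (q:ℝ) * (1 + Real.log q) := block_sum hq ha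
  have h2 : (0:ℝ) ≤ ((K/q + 1 : ℕ) : ℝ) := by positivity
  have h3 : ((K/q + 1 : ℕ) : ℝ) * ((q:ℝ) * (1 + Real.log q)) ≤ ((K:ℝ) + q) * (1 + Real.log q) := by
    have hlog : (0:ℝ) ≤ 1 + Real.log q := by
      have : (0:ℝ) ≤ Real.log q := Real.log_nonneg (by exact_mod_cast hq)
      linarith
    have hKq : ((K/q + 1 : ℕ) : ℝ) * q ≤ (K:ℝ) + q := by
      have := Nat.div_mul_le_self K q
      push_cast
      have hcast : ((K/q : ℕ) : ℝ) * q ≤ (K:ℝ) := by exact_mod_cast this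
      linarith
    calc ((K/q + 1 : ℕ) : ℝ) * ((q:ℝ) * (1 + Real.log q)) = (((K/q + 1 : ℕ) : ℝ) * q) * (1 + Real.log q) := by ring
    _ ≤ ((K:ℝ) + q) * (1 + Real.log q) := mul_le_mul_of_nonneg_right hKq hlog
  calc ((K/q + 1 : ℕ) : ℝ) * (∑ i ∈ range q, Fw a q i) ≤ ((K/q + 1 : ℕ) : ℝ) * ((q:ℝ) * (1 + Real.log q)) :=
        mul_le_mul_of_nonneg_left h1 h2
  _ ≤ ((K:ℝ) + q) * (1 + Real.log q) := h3
/-- the hyperbolic region -/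
def P (N : ℕ) : Finset (ℕ × ℕ) := (Icc 1 N ×ˢ Icc 1 N).filter (fun p => p.1 * p.2 ≤ N)

lemma mem_P {N : ℕ} {p : ℕ × ℕ} : p ∈ P N ↔ (1 ≤ p.1 ∧ 1 ≤ p.2 ∧ p.1 * p.2 ≤ N) := by
  simp only [P, Finset.mem_filter, Finset.mem_product, mem_Icc]
  constructor
  · rintro ⟨⟨⟨h1, h2⟩, h3, h4⟩, h5⟩
    exact ⟨h1, h3, h5⟩
  · rintro ⟨h1, h2, h3⟩
    have hA : p.1 ≤ N := le_trans (Nat.le_mul_of_pos_right _ h2) h3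
    have hB : p.2 ≤ N := le_trans (Nat.le_mul_of_pos_left _ h1) h3
    exact ⟨⟨⟨h1, hA⟩, h2, hB⟩, h3⟩

lemma pair_sum (N : ℕ) (f : ℕ → ℂ) :
    ∑ n ∈ Icc 1 N, (n.divisors.card : ℂ) * f n = ∑ p ∈ P N, f (p.1 * p.2) := by
  have hstep : ∀ n ∈ Icc 1 N, (n.divisors.card : ℂ) * f n
      = ∑ p ∈ n.divisorsAntidiagonal, f (p.1 * p.2) := by
    intro n hn
    simp only [mem_Icc] at hn
    have hn0 : n ≠ 0 := by omega
    have hterms : ∀ p ∈ n.divisorsAntidiagonal, f (p.1 * p.2) = f n := by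
      intro p hp
      rw [(Nat.mem_divisorsAntidiagonal.mp hp).1]
    rw [Finset.sum_congr rfl hterms, Finset.sum_const, nsmul_eq_mul]
    congr 2
    rw [← Nat.image_fst_divisorsAntidiagonal]
    rw [Finset.card_image_of_injOn]
    intro p hp p' hp' hfst
    have h1 := (Nat.mem_divisorsAntidiagonal.mp (by exact_mod_cast hp)).1
    have h2 := (Nat.mem_divisorsAntidiagonal.mp (by exact_mod_cast hp')).1
    have hp1 : p.1 ≠ 0 := by
      intro h; rw [h] at h1; simp at h1; exact hn0 h1.symm
    apply Prod.ext hfst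
    have hmul : p.1 * p.2 = p.1 * p'.2 := by rw [h1, hfst, h2]
    exact Nat.eq_of_mul_eq_mul_left (Nat.pos_of_ne_zero hp1) hmul
  rw [Finset.sum_congr rfl hstep]
  rw [← Finset.sum_biUnion]
  · congr 1
    ext p
    simp only [Finset.mem_biUnion, Nat.mem_divisorsAntidiagonal, mem_P]
    constructor
    · rintro ⟨n, hn, hpn, hn0⟩
      simp only [mem_Icc] at hn
      have hp1 : 1 ≤ p.1 := by
        rcases Nat.eq_zero_or_pos p.1 with h | h
        · exfalso; rw [h] at hpn; simp at hpn; omega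
        · exact h
      have hp2 : 1 ≤ p.2 := by
        rcases Nat.eq_zero_or_pos p.2 with h | h
        · exfalso; rw [h] at hpn; simp at hpn; omega
        · exact h
      exact ⟨hp1, hp2, by omega⟩
    · rintro ⟨h1, h2, h3⟩
      refine ⟨p.1 * p.2, by simp only [mem_Icc]; exact ⟨Nat.one_le_iff_ne_zero.mpr (Nat.mul_ne_zero (by omega) (by omega)), h3⟩, rfl, Nat.mul_ne_zero (by omega) (by omega)⟩
  · intro n hn m hm hnm
    apply Finset.disjoint_left.mpr
    intro p hp hp'
    have h1 := (Nat.mem_divisorsAntidiagonal.mp hp).1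
    have h2 := (Nat.mem_divisorsAntidiagonal.mp hp').1
    exact hnm (h1 ▸ h2)

lemma sliceIcc {N d : ℕ} (hd : 1 ≤ d) :
    (Icc 1 N).filter (fun m => d * m ≤ N) = Icc 1 (N / d) := by
  ext m
  simp only [Finset.mem_filter, mem_Icc]
  constructor
  · rintro ⟨⟨h1, h2⟩, h3⟩
    exact ⟨h1, (Nat.le_div_iff_mul_le hd).mpr (by rwa [mul_comm])⟩
  · rintro ⟨h1, h2⟩
    have h3 : m * d ≤ N := (Nat.le_div_iff_mul_le hd).mp h2
    refine ⟨⟨h1, ?_⟩, by rwa [mul_comm] at h3⟩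
    calc m ≤ m * d := Nat.le_mul_of_pos_right _ hd
    _ ≤ N := h3

lemma hyperbola (N K : ℕ) (hK : 1 ≤ K) (hKN : K * K ≤ N) (hN : N < (K+1) * (K+1))
    (f : ℕ × ℕ → ℂ) :
    ∑ p ∈ P N, f p = (∑ d ∈ Icc 1 K, ∑ m ∈ Icc 1 (N/d), f (d, m))
      + (∑ m ∈ Icc 1 K, ∑ d ∈ Icc 1 (N/m), f (d, m))
      - (∑ d ∈ Icc 1 K, ∑ m ∈ Icc 1 K, f (d, m)) := by
  have hKle : K ≤ N := le_trans (Nat.le_mul_of_pos_right _ hK) hKN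
  set P₁ := (P N).filter (fun p => p.1 ≤ K) with hP₁
  set P₂ := (P N).filter (fun p => p.2 ≤ K) with hP₂
  have hunion : P₁ ∪ P₂ = P N := by
    ext p
    simp only [hP₁, hP₂, Finset.mem_union, Finset.mem_filter, mem_P]
    constructor
    · rintro (⟨h, _⟩ | ⟨h, _⟩) <;> exact h
    · rintro ⟨h1, h2, h3⟩
      by_contra hcon
      push_neg at hcon
      obtain ⟨hc1, hc2⟩ := hcon
      have hK1 : K + 1 ≤ p.1 := hc1 ⟨h1, h2, h3⟩
      have hK2 : K + 1 ≤ p.2 := hc2 ⟨h1, h2, h3⟩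
      have := Nat.mul_le_mul hK1 hK2
      omega
  have hinter : P₁ ∩ P₂ = Icc 1 K ×ˢ Icc 1 K := by
    ext p
    simp only [hP₁, hP₂, Finset.mem_inter, Finset.mem_filter, mem_P, Finset.mem_product, mem_Icc]
    constructor
    · rintro ⟨⟨⟨h1, h2, h3⟩, h4⟩, ⟨_, h5⟩⟩
      exact ⟨⟨h1, h4⟩, h2, h5⟩
    · rintro ⟨⟨ha1, ha2⟩, hb1, hb2⟩
      have hmul : p.1 * p.2 ≤ N := le_trans (Nat.mul_le_mul ha2 hb2) hKN
      exact ⟨⟨⟨ha1, hb1, hmul⟩, ha2⟩, ⟨ha1, hb1, hmul⟩, hb2⟩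
  have hsplit := Finset.sum_union_inter (s₁ := P₁) (s₂ := P₂) (f := f)
  rw [hunion, hinter] at hsplit
  have hS1 : ∑ p ∈ P₁, f p = ∑ d ∈ Icc 1 K, ∑ m ∈ Icc 1 (N/d), f (d, m) := by
    have hP1eq : P₁ = (Icc 1 K ×ˢ Icc 1 N).filter (fun p => p.1 * p.2 ≤ N) := by
      ext p
      simp only [hP₁, Finset.mem_filter, mem_P, Finset.mem_product, mem_Icc]
      constructor
      · rintro ⟨⟨h1, h2, h3⟩, h4⟩
        have hB : p.2 ≤ N := le_trans (Nat.le_mul_of_pos_left _ h1) h3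
        exact ⟨⟨⟨h1, h4⟩, h2, hB⟩, h3⟩
      · rintro ⟨⟨⟨ha1, ha2⟩, hb⟩, hab⟩
        exact ⟨⟨ha1, hb.1, hab⟩, ha2⟩
    rw [hP1eq, Finset.sum_filter, Finset.sum_product]
    refine Finset.sum_congr rfl fun d hd => ?_
    simp only [mem_Icc] at hd
    rw [← Finset.sum_filter, sliceIcc hd.1]
  have hS2 : ∑ p ∈ P₂, f p = ∑ m ∈ Icc 1 K, ∑ d ∈ Icc 1 (N/m), f (d, m) := by
    have hP2eq : P₂ = (Icc 1 N ×ˢ Icc 1 K).filter (fun p => p.1 * p.2 ≤ N) := by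
      ext p
      simp only [hP₂, Finset.mem_filter, mem_P, Finset.mem_product, mem_Icc]
      constructor
      · rintro ⟨⟨h1, h2, h3⟩, h4⟩
        have hA : p.1 ≤ N := le_trans (Nat.le_mul_of_pos_right _ h2) h3
        exact ⟨⟨⟨h1, hA⟩, h2, h4⟩, h3⟩
      · rintro ⟨⟨ha, hb1, hb2⟩, hab⟩
        exact ⟨⟨ha.1, hb1, hab⟩, hb2⟩
    rw [hP2eq, Finset.sum_filter, Finset.sum_product_right]
    refine Finset.sum_congr rfl fun m hm => ?_
    simp only [mem_Icc] at hm
    rw [← Finset.sum_filter]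
    have hsl : (Icc 1 N).filter (fun d => d * m ≤ N) = Icc 1 (N / m) := by
      rw [← sliceIcc (N := N) hm.1]
      ext d
      simp only [Finset.mem_filter, mem_Icc]
      rw [mul_comm]
    rw [hsl]
  have hS3 : ∑ p ∈ Icc 1 K ×ˢ Icc 1 K, f p = ∑ d ∈ Icc 1 K, ∑ m ∈ Icc 1 K, f (d, m) :=
    Finset.sum_product _ _ _
  rw [hS1, hS2, hS3] at hsplit
  linear_combination hsplit
lemma col_mult_eval {q : ℕ} (hq : 1 ≤ q) (a : ℤ) (j M : ℕ) :
    ∑ m ∈ Icc 1 M, e ((a:ℝ)/q * (((q*j) * m : ℕ) : ℝ)) = (M:ℂ) := by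
  rw [← inner_mult hq a j M]
  refine Finset.sum_congr rfl fun m _ => ?_
  congr 1
  push_cast
  ring

lemma col_err {q : ℕ} (hq : 1 ≤ q) {a : ℤ} (ha : Int.gcd a q = 1) {d : ℕ} (hd : ¬ q ∣ d) (M : ℕ) :
    ‖∑ m ∈ Icc 1 M, e ((a:ℝ)/q * ((d * m : ℕ) : ℝ))‖ ≤ Fw a q d := by
  have hr : ((res a q d : ℕ) : ℤ) = a * d % q := res_cast hq a d
  have hkey := key_inner hq ha hd hr (rfl : min (res a q d) (q - res a q d) = _) M
  have hcast : ∑ m ∈ Icc 1 M, e ((a:ℝ)/q * ((d * m : ℕ) : ℝ))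
      = ∑ m ∈ Icc 1 M, e ((a:ℝ)/q * ((d:ℝ) * m)) := by
    refine Finset.sum_congr rfl fun m _ => ?_
    congr 1
    push_cast
    ring
  rw [hcast, Fw, if_neg hd, wt]
  exact_mod_cast hkey

lemma mult_filter_eq {q K : ℕ} (hq : 1 ≤ q) :
    (Icc 1 K).filter (fun d => q ∣ d) = (Icc 1 (K/q)).image (fun j => q * j) := by
  ext d
  simp only [Finset.mem_filter, Finset.mem_image, mem_Icc]
  constructor
  · rintro ⟨⟨h1, h2⟩, j, hj⟩
    refine ⟨j, ⟨?_, ?_⟩, hj.symm⟩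
    · rcases Nat.eq_zero_or_pos j with h | h
      · subst h; simp at hj; omega
      · exact h
    · rw [Nat.le_div_iff_mul_le hq, mul_comm]
      omega
  · rintro ⟨j, ⟨hj1, hj2⟩, rfl⟩
    rw [Nat.le_div_iff_mul_le hq] at hj2
    refine ⟨⟨Nat.one_le_iff_ne_zero.mpr (Nat.mul_ne_zero (by omega) (by omega)), ?_⟩, dvd_mul_right q j⟩
    rw [mul_comm]
    exact hj2

lemma col_split {q : ℕ} (hq : 1 ≤ q) {a : ℤ} (ha : Int.gcd a q = 1) (K : ℕ) (Mf : ℕ → ℕ) :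
    ‖(∑ d ∈ Icc 1 K, ∑ m ∈ Icc 1 (Mf d), e ((a:ℝ)/q * ((d * m : ℕ) : ℝ)))
       - ∑ j ∈ Icc 1 (K/q), ((Mf (q*j) : ℕ) : ℂ)‖ ≤ ((K:ℝ) + q) * (1 + Real.log q) := by
  set col : ℕ → ℂ := fun d => ∑ m ∈ Icc 1 (Mf d), e ((a:ℝ)/q * ((d * m : ℕ) : ℝ)) with hcol
  have hsplit : ∑ d ∈ Icc 1 K, col d
      = (∑ d ∈ (Icc 1 K).filter (fun d => q ∣ d), col d)
        + ∑ d ∈ (Icc 1 K).filter (fun d => ¬ q ∣ d), col d :=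
    (Finset.sum_filter_add_sum_filter_not _ _ _).symm
  have hmult : ∑ d ∈ (Icc 1 K).filter (fun d => q ∣ d), col d
      = ∑ j ∈ Icc 1 (K/q), ((Mf (q*j) : ℕ) : ℂ) := by
    rw [mult_filter_eq hq, Finset.sum_image (fun i _ j _ h => by
      exact Nat.eq_of_mul_eq_mul_left (by omega) h)]
    refine Finset.sum_congr rfl fun j _ => ?_
    exact col_mult_eval hq a j (Mf (q*j))
  have herr : ‖∑ d ∈ (Icc 1 K).filter (fun d => ¬ q ∣ d), col d‖
      ≤ ((K:ℝ) + q) * (1 + Real.log q) := by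
    refine le_trans (norm_sum_le _ _) ?_
    have h1 : ∀ d ∈ (Icc 1 K).filter (fun d => ¬ q ∣ d), ‖col d‖ ≤ Fw a q d := by
      intro d hd
      simp only [Finset.mem_filter] at hd
      exact col_err hq ha hd.2 (Mf d)
    refine le_trans (Finset.sum_le_sum h1) ?_
    refine le_trans (Finset.sum_le_sum_of_subset_of_nonneg (Finset.filter_subset _ _)
      (fun d _ _ => Fw_nonneg a q d)) ?_
    exact err_sum hq ha K
  have : (∑ d ∈ Icc 1 K, col d) - ∑ j ∈ Icc 1 (K/q), ((Mf (q*j) : ℕ) : ℂ)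
      = ∑ d ∈ (Icc 1 K).filter (fun d => ¬ q ∣ d), col d := by
    rw [hsplit, hmult]
    ring
  rw [this]
  exact herr
set_option maxHeartbeats 1000000 in
lemma main_estimate {x : ℝ} (hx : 2 ≤ x) {q : ℕ} (hq : 1 ≤ q) (hqx : (q:ℝ) ≤ Real.sqrt x) :
    |2 * (∑ j ∈ Icc 1 (⌊Real.sqrt x⌋₊ / q), ((⌊x⌋₊ / (q*j) : ℕ) : ℝ))
      - ((⌊Real.sqrt x⌋₊ / q : ℕ) : ℝ) * (⌊Real.sqrt x⌋₊ : ℝ)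
      - (x / q) * (Real.log (x / (q:ℝ)^2) + 2 * Real.eulerMascheroniConstant - 1)|
      ≤ 12 * Real.sqrt x := by
  have hx0 : (0:ℝ) < x := by linarith
  set s := Real.sqrt x with hs
  have hs0 : 0 < s := Real.sqrt_pos.mpr hx0
  have hss : s * s = x := Real.mul_self_sqrt hx0.le
  have hq0R : (0:ℝ) < q := by exact_mod_cast hq
  have hq1R : (1:ℝ) ≤ q := by exact_mod_cast hq
  set N := ⌊x⌋₊ with hN
  set K := ⌊s⌋₊ with hK
  set J := K / q with hJ
  set u := s / q with hu
  have hs1 : 1 ≤ s := le_trans hq1R hqx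
  have hu1 : 1 ≤ u := (one_le_div hq0R).mpr hqx
  have hu0 : 0 < u := by linarith
  have hqK : q ≤ K := Nat.le_floor hqx
  have hK1 : 1 ≤ K := le_trans hq hqK
  have hJ1 : 1 ≤ J := (Nat.one_le_div_iff (by omega)).mpr hqK
  have hJfloor : J = ⌊u⌋₊ := (Nat.floor_div_natCast s q).symm
  have hJu : (J:ℝ) ≤ u := by
    rw [hJfloor]; exact Nat.floor_le hu0.le
  have huJ : u < (J:ℝ) + 1 := by
    rw [hJfloor]; exact_mod_cast Nat.lt_floor_add_one u
  have hJR : (1:ℝ) ≤ (J:ℝ) := by exact_mod_cast hJ1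
  have hJ0R : (0:ℝ) < (J:ℝ) := by linarith
  have hu2J : u ≤ 2 * J := by linarith
  have hKs : (K:ℝ) ≤ s := Nat.floor_le hs0.le
  have hsK : s < (K:ℝ) + 1 := Nat.lt_floor_add_one s
  have hK0R : (0:ℝ) < (K:ℝ) := by exact_mod_cast hK1
  have hqu : (q:ℝ) * u = s := by rw [hu]; field_simp
  have hules : u ≤ s := div_le_self hs0.le hq1R
  have hs2qJ : s ≤ 2 * ((q:ℝ) * J) := by
    have h1 : (q:ℝ) * u ≤ (q:ℝ) * (2 * J) := mul_le_mul_of_nonneg_left hu2J hq0R.le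
    rw [hqu] at h1
    linarith
  have hxqJ : x / ((q:ℝ) * J) ≤ 2 * s := by
    rw [div_le_iff₀ (by positivity)]
    nlinarith [hs2qJ, hs0, hss]
  have hus : u * s = x / q := by
    rw [hu, div_mul_eq_mul_div, hss]
  -- term 1 bounds
  set T1 : ℝ := ∑ j ∈ Icc 1 J, ((N / (q*j) : ℕ) : ℝ) with hT1
  have hfloorval : ∀ j ∈ Icc 1 J,
      x / ((q:ℝ) * j) - 1 ≤ ((N / (q*j) : ℕ) : ℝ) ∧ ((N / (q*j) : ℕ) : ℝ) ≤ x / ((q:ℝ) * j) := by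
    intro j hj
    simp only [mem_Icc] at hj
    have hqj0 : (0:ℝ) < (q:ℝ) * j := by
      have : (1:ℝ) ≤ (j:ℝ) := by exact_mod_cast hj.1
      positivity
    have hfl : (N / (q*j) : ℕ) = ⌊x / ((q*j : ℕ):ℝ)⌋₊ := (Nat.floor_div_natCast x (q*j)).symm
    have hcast : ((q*j : ℕ):ℝ) = (q:ℝ) * j := by push_cast; ring
    rw [hfl, hcast]
    have hnn : 0 ≤ x / ((q:ℝ) * j) := by positivity
    constructor
    · have := Nat.lt_floor_add_one (x / ((q:ℝ) * j))
      linarith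
    · exact Nat.floor_le hnn
  have hHsum : ∑ j ∈ Icc 1 J, x / ((q:ℝ) * j) = (x/q) * Hr J := by
    rw [Hr, Finset.mul_sum]
    refine Finset.sum_congr rfl fun j hj => ?_
    simp only [mem_Icc] at hj
    have : (j:ℝ) ≠ 0 := by exact_mod_cast (by omega : j ≠ 0)
    field_simp
  have hT1ub : T1 ≤ (x/q) * Hr J := by
    rw [← hHsum]
    exact Finset.sum_le_sum fun j hj => (hfloorval j hj).2
  have hT1lb : (x/q) * Hr J - J ≤ T1 := by
    rw [← hHsum]
    have h := Finset.sum_le_sum fun j hj => (hfloorval j hj).1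
    have hcard : ∑ j ∈ Icc 1 J, (1:ℝ) = (J:ℝ) := by
      simp [Nat.card_Icc]
    rw [Finset.sum_sub_distrib, hcard] at h
    linarith
  -- gamma approximation
  have hHr := Hr_close hJ1
  -- log comparison
  have hlog1 : 0 ≤ Real.log u - Real.log J :=
    sub_nonneg.mpr (Real.log_le_log hJ0R hJu)
  have hlog2 : Real.log u - Real.log J ≤ 1 / J := by
    have hdiv : Real.log u - Real.log J = Real.log (u / J) :=
      (Real.log_div (by linarith) (by linarith)).symm
    rw [hdiv]
    have h1 : Real.log (u / J) ≤ u / J - 1 := Real.log_le_sub_one_of_pos (by positivity)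
    have h2 : u / (J:ℝ) ≤ ((J:ℝ) + 1) / J := (div_le_div_iff_of_pos_right hJ0R).mpr huJ.le
    have h3 : ((J:ℝ) + 1) / J = 1 + 1/J := by field_simp
    linarith
  -- log identity
  have hxq2 : Real.log (x / (q:ℝ)^2) = 2 * Real.log u := by
    have hval : x / (q:ℝ)^2 = u^2 := by
      rw [hu, div_pow, hss.symm]
      ring_nf
    rw [hval, Real.log_pow]
    norm_num
  -- the four pieces
  set γ := Real.eulerMascheroniConstant with hγ
  set A : ℝ := 2 * (T1 - (x/q) * Hr J) with hA
  set B : ℝ := 2 * (x/q) * (Hr J - Real.log J - γ) with hB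
  set C : ℝ := 2 * (x/q) * (Real.log J - Real.log u) with hC
  set D : ℝ := u * s - (J:ℝ) * K with hD
  have hassemble : 2 * T1 - ((J:ℕ):ℝ) * (K:ℝ)
      - (x / q) * (Real.log (x / (q:ℝ)^2) + 2 * γ - 1) = A + B + C + D := by
    rw [hxq2, hA, hB, hC, hD]
    linear_combination hus - (2/(q:ℝ)) * hss
  have hxq0 : 0 < x / q := by positivity
  have hAb : |A| ≤ 2 * s := by
    rw [hA, abs_mul, abs_two]
    have : |T1 - (x/q) * Hr J| ≤ (J:ℝ) := by
      rw [abs_le]; constructor <;> linarith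
    linarith [this, hJu, hules]
  have hxqJ' : (x/q) * (1/(J:ℝ)) ≤ 2 * s := by
    have : (x/q) * (1/(J:ℝ)) = x / ((q:ℝ) * J) := by field_simp
    linarith [hxqJ, this.symm.le, this.le]
  have hBb : |B| ≤ 4 * s := by
    rw [hB, abs_mul, abs_mul, abs_two, abs_of_pos hxq0]
    have h1 : |Hr J - Real.log J - γ| ≤ 1/(J:ℝ) := hHr
    have h2 := mul_le_mul_of_nonneg_left h1 hxq0.le
    linarith [hxqJ']
  have hCb : |C| ≤ 4 * s := by
    rw [hC, abs_mul, abs_mul, abs_two, abs_of_pos hxq0]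
    have h1 : |Real.log (J:ℝ) - Real.log u| ≤ 1/(J:ℝ) := by
      rw [abs_le]
      constructor <;> linarith
    have h2 := mul_le_mul_of_nonneg_left h1 hxq0.le
    linarith [hxqJ']
  have hDb : |D| ≤ 2 * s := by
    rw [hD, abs_le]
    constructor
    · have h1 : (J:ℝ) * K ≤ u * s := mul_le_mul hJu hKs (by positivity) hu0.le
      linarith
    · have e1 : u * s - (J:ℝ)*K = u * (s - K) + (K:ℝ) * (u - J) := by ring
      have h2 : u * (s - K) ≤ u * 1 := mul_le_mul_of_nonneg_left (by linarith) hu0.le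
      have h3 : (K:ℝ) * (u - J) ≤ (K:ℝ) * 1 := mul_le_mul_of_nonneg_left (by linarith) hK0R.le
      have h2' : u * (s - K) ≤ u := by linarith [mul_one u]
      have h3' : (K:ℝ) * (u - J) ≤ (K:ℝ) := by linarith [mul_one (K:ℝ)]
      linarith [e1, h2', h3', hules, hKs]
  calc |2 * T1 - ((J:ℕ):ℝ) * (K:ℝ) - (x / q) * (Real.log (x / (q:ℝ)^2) + 2 * γ - 1)|
      = |A + B + C + D| := by rw [hassemble]
  _ ≤ |A + B + C| + |D| := abs_add_le _ _
  _ ≤ |A + B| + |C| + |D| := by linarith [abs_add_le (A+B) C]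
  _ ≤ |A| + |B| + |C| + |D| := by linarith [abs_add_le A B]
  _ ≤ 12 * s := by linarith

set_option maxHeartbeats 1000000 in
/-- **Lemma (divisor exponential sum at rationals).** There is `C` such that for all `x ≥ 2`,
all integers `1 ≤ q ≤ x^(1/2)` and all `a` with `gcd(a,q) = 1`, one has
`|Σ_{n ≤ x} τ(n) e(an/q) - (x/q)(log(x/q²) + 2γ - 1)| ≤ C x^(1/2) (1 + log q)`. -/
theorem divisor_exponential_sum_major_arc :
    ∃ C : ℝ, ∀ x : ℝ, 2 ≤ x → ∀ q : ℕ, 1 ≤ q → (q : ℝ) ≤ x ^ ((1 : ℝ) / 2) →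
      ∀ a : ℤ, Int.gcd a q = 1 →
      ‖(∑ n ∈ Finset.Icc 1 ⌊x⌋₊, (n.divisors.card : ℂ) * e ((a : ℝ) / q * n)) -
          (x / q : ℂ) * ((Real.log (x / (q : ℝ) ^ 2) : ℂ) +
            2 * (Real.eulerMascheroniConstant : ℂ) - 1)‖ ≤
        C * x ^ ((1 : ℝ) / 2) * (1 + Real.log q) := by
  use 18
  intro x hx q hq hqx a ha
  have hsqrt : x ^ ((1:ℝ)/2) = Real.sqrt x := (Real.sqrt_eq_rpow x).symm
  rw [hsqrt] at hqx ⊢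
  have hx0 : (0:ℝ) < x := by linarith
  have hs0 : 0 < Real.sqrt x := Real.sqrt_pos.mpr hx0
  have hss : Real.sqrt x * Real.sqrt x = x := Real.mul_self_sqrt hx0.le
  have hq1R : (1:ℝ) ≤ q := by exact_mod_cast hq
  have hq0R : (0:ℝ) < q := by linarith
  have hs1 : 1 ≤ Real.sqrt x := le_trans hq1R hqx
  have hKs : ((⌊Real.sqrt x⌋₊:ℕ):ℝ) ≤ Real.sqrt x := Nat.floor_le hs0.le
  have hsK : Real.sqrt x < ((⌊Real.sqrt x⌋₊:ℕ):ℝ) + 1 := Nat.lt_floor_add_one _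
  have hK1 : 1 ≤ ⌊Real.sqrt x⌋₊ := Nat.le_floor (by exact_mod_cast hs1)
  have hKKN : ⌊Real.sqrt x⌋₊ * ⌊Real.sqrt x⌋₊ ≤ ⌊x⌋₊ := by
    apply Nat.le_floor
    push_cast
    nlinarith
  have hNKK : ⌊x⌋₊ < (⌊Real.sqrt x⌋₊+1) * (⌊Real.sqrt x⌋₊+1) := by
    have h1 : ((⌊x⌋₊:ℕ):ℝ) ≤ x := Nat.floor_le hx0.le
    have h2 : x < (((⌊Real.sqrt x⌋₊:ℕ):ℝ)+1) * (((⌊Real.sqrt x⌋₊:ℕ):ℝ)+1) := by nlinarith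
    have h3 : ((⌊x⌋₊:ℕ):ℝ) < (((⌊Real.sqrt x⌋₊+1) * (⌊Real.sqrt x⌋₊+1) : ℕ):ℝ) := by
      push_cast
      linarith
    exact_mod_cast h3
  -- decomposition
  have hpair := pair_sum ⌊x⌋₊ (fun n => e ((a:ℝ)/q * (n:ℝ)))
  have hhyp := hyperbola ⌊x⌋₊ ⌊Real.sqrt x⌋₊ hK1 hKKN hNKK
    (fun p => e ((a:ℝ)/q * ((p.1*p.2 : ℕ):ℝ)))
  simp only at hhyp
  have hsym : ∑ m ∈ Icc 1 ⌊Real.sqrt x⌋₊, ∑ d ∈ Icc 1 (⌊x⌋₊/m), e ((a:ℝ)/q * ((d*m : ℕ):ℝ))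
      = ∑ d ∈ Icc 1 ⌊Real.sqrt x⌋₊, ∑ m ∈ Icc 1 (⌊x⌋₊/d), e ((a:ℝ)/q * ((d*m : ℕ):ℝ)) := by
    refine Finset.sum_congr rfl fun m _ => Finset.sum_congr rfl fun d _ => ?_
    rw [Nat.mul_comm]
  rw [hsym] at hhyp
  have hS : ∑ n ∈ Finset.Icc 1 ⌊x⌋₊, (n.divisors.card : ℂ) * e ((a : ℝ) / q * n)
      = 2 * (∑ d ∈ Icc 1 ⌊Real.sqrt x⌋₊, ∑ m ∈ Icc 1 (⌊x⌋₊/d), e ((a:ℝ)/q * ((d*m : ℕ):ℝ)))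
        - ∑ d ∈ Icc 1 ⌊Real.sqrt x⌋₊, ∑ m ∈ Icc 1 ⌊Real.sqrt x⌋₊, e ((a:ℝ)/q * ((d*m : ℕ):ℝ)) := by
    rw [hpair, hhyp]
    ring
  -- the two column-sum estimates
  have h1 := col_split hq ha ⌊Real.sqrt x⌋₊ (fun d => ⌊x⌋₊ / d)
  have h3 := col_split hq ha ⌊Real.sqrt x⌋₊ (fun _ => ⌊Real.sqrt x⌋₊)
  -- main term identifications
  set J := ⌊Real.sqrt x⌋₊ / q with hJdef
  have hM1 : (∑ j ∈ Icc 1 J, ((⌊x⌋₊ / (q*j) : ℕ) : ℂ))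
      = (((∑ j ∈ Icc 1 J, ((⌊x⌋₊ / (q*j) : ℕ) : ℝ)) : ℝ) : ℂ) := by
    push_cast
    rfl
  have hM3 : (∑ _j ∈ Icc 1 J, ((⌊Real.sqrt x⌋₊ : ℕ) : ℂ))
      = ((((J:ℕ):ℝ) * ((⌊Real.sqrt x⌋₊:ℕ):ℝ) : ℝ) : ℂ) := by
    rw [Finset.sum_const, Nat.card_Icc]
    push_cast
    simp [mul_comm]
  have hmain := main_estimate hx hq hqx
  rw [← hJdef] at hmain
  -- cast of the main term
  have hcast : (x / q : ℂ) * ((Real.log (x / (q : ℝ) ^ 2) : ℂ) +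
        2 * (Real.eulerMascheroniConstant : ℂ) - 1)
      = (((x / q) * (Real.log (x / (q:ℝ)^2) + 2 * Real.eulerMascheroniConstant - 1) : ℝ) : ℂ) := by
    push_cast
    ring
  -- decompose the difference
  set Sig1 : ℂ := ∑ d ∈ Icc 1 ⌊Real.sqrt x⌋₊, ∑ m ∈ Icc 1 (⌊x⌋₊/d), e ((a:ℝ)/q * ((d*m : ℕ):ℝ)) with hSig1
  set Sig3 : ℂ := ∑ d ∈ Icc 1 ⌊Real.sqrt x⌋₊, ∑ m ∈ Icc 1 ⌊Real.sqrt x⌋₊, e ((a:ℝ)/q * ((d*m : ℕ):ℝ)) with hSig3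
  set M1 : ℂ := ∑ j ∈ Icc 1 J, ((⌊x⌋₊ / (q*j) : ℕ) : ℂ) with hM1def
  set M3 : ℂ := ∑ _j ∈ Icc 1 J, ((⌊Real.sqrt x⌋₊ : ℕ) : ℂ) with hM3def
  set mainR : ℝ := (x / q) * (Real.log (x / (q:ℝ)^2) + 2 * Real.eulerMascheroniConstant - 1) with hmainR
  set R : ℝ := 2 * (∑ j ∈ Icc 1 J, ((⌊x⌋₊ / (q*j) : ℕ) : ℝ)) - ((J:ℕ):ℝ) * ((⌊Real.sqrt x⌋₊:ℕ):ℝ) with hR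
  have hdecomp : (∑ n ∈ Finset.Icc 1 ⌊x⌋₊, (n.divisors.card : ℂ) * e ((a : ℝ) / q * n))
      - (x / q : ℂ) * ((Real.log (x / (q : ℝ) ^ 2) : ℂ) +
          2 * (Real.eulerMascheroniConstant : ℂ) - 1)
      = 2 * (Sig1 - M1) - (Sig3 - M3) + ((R - mainR : ℝ) : ℂ) := by
    rw [hS, hcast, hR]
    push_cast [hM1def, hM3def, hmainR]
    rw [Finset.sum_const, Nat.card_Icc]
    push_cast
    ring
  rw [hdecomp]
  -- norms
  have hn1 : ‖Sig1 - M1‖ ≤ ((⌊Real.sqrt x⌋₊:ℕ):ℝ) * (1 + Real.log q) + (q:ℝ) * (1 + Real.log q) := by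
    refine le_trans h1 (le_of_eq (by ring))
  have hn3 : ‖Sig3 - M3‖ ≤ ((⌊Real.sqrt x⌋₊:ℕ):ℝ) * (1 + Real.log q) + (q:ℝ) * (1 + Real.log q) := by
    refine le_trans h3 (le_of_eq (by ring))
  have hnR : ‖((R - mainR : ℝ) : ℂ)‖ ≤ 12 * Real.sqrt x := by
    rw [Complex.norm_real, Real.norm_eq_abs]
    exact hmain
  have htri : ‖2 * (Sig1 - M1) - (Sig3 - M3) + ((R - mainR : ℝ) : ℂ)‖
      ≤ 2 * ‖Sig1 - M1‖ + ‖Sig3 - M3‖ + ‖((R - mainR : ℝ) : ℂ)‖ := by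
    calc ‖2 * (Sig1 - M1) - (Sig3 - M3) + ((R - mainR : ℝ) : ℂ)‖
        ≤ ‖2 * (Sig1 - M1) - (Sig3 - M3)‖ + ‖((R - mainR : ℝ) : ℂ)‖ := norm_add_le _ _
    _ ≤ ‖2 * (Sig1 - M1)‖ + ‖Sig3 - M3‖ + ‖((R - mainR : ℝ) : ℂ)‖ := by
        have := norm_sub_le (2 * (Sig1 - M1)) (Sig3 - M3)
        linarith
    _ = 2 * ‖Sig1 - M1‖ + ‖Sig3 - M3‖ + ‖((R - mainR : ℝ) : ℂ)‖ := by
        rw [norm_mul]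
        norm_num
  -- final numeric bound
  have hlogq : 0 ≤ Real.log q := Real.log_nonneg hq1R
  have hL1 : (1:ℝ) ≤ 1 + Real.log q := by linarith
  have hL0 : (0:ℝ) ≤ 1 + Real.log q := by linarith
  have hKq : ((⌊Real.sqrt x⌋₊:ℕ):ℝ) * (1 + Real.log q) + (q:ℝ) * (1 + Real.log q)
      ≤ 2 * Real.sqrt x * (1 + Real.log q) := by
    have h1 : ((⌊Real.sqrt x⌋₊:ℕ):ℝ) * (1 + Real.log q) ≤ Real.sqrt x * (1 + Real.log q) :=
      mul_le_mul_of_nonneg_right hKs hL0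
    have h2 : (q:ℝ) * (1 + Real.log q) ≤ Real.sqrt x * (1 + Real.log q) :=
      mul_le_mul_of_nonneg_right hqx hL0
    linarith
  have h12 : 12 * Real.sqrt x ≤ 12 * Real.sqrt x * (1 + Real.log q) := by
    nlinarith [hs0]
  calc ‖2 * (Sig1 - M1) - (Sig3 - M3) + ((R - mainR : ℝ) : ℂ)‖
      ≤ 2 * ‖Sig1 - M1‖ + ‖Sig3 - M3‖ + ‖((R - mainR : ℝ) : ℂ)‖ := htri
  _ ≤ 2 * (2 * Real.sqrt x * (1 + Real.log q)) + 2 * Real.sqrt x * (1 + Real.log q)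
      + 12 * Real.sqrt x * (1 + Real.log q) := by
      have := le_trans hn1 hKq
      have := le_trans hn3 hKq
      have := le_trans hnR h12
      linarith
  _ = 18 * Real.sqrt x * (1 + Real.log q) := by ring
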